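/- Let ϑ = (ϑ_1, ϑ_2, …) be an infinite sequence of non-negative reals with ϑ_j ≥ ϑ_{j+1} for all j ≥ 1. Then ϑ ∈ 𝒮 if and only if 1/2 ≤ ϑ_1 ≤ 1 and there exists a (finite or infinite) strictly increasing sequence of non-negative integers 0 = k_1 < k_2 < k_3 < ⋯, with exactly as many terms as ϑ has nonzero entries, such that ϑ_j = ϑ_1 · 2^{−k_j} for every j with ϑ_j > 0, ϑ_j = 0 for every j beyond the length of the sequence (k_j), and 1/ϑ_1 = Σ_j 2^{−k_j} (a finite- or infinite-length binary expansion of 1/ϑ_1). -/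

import Mathlib

open Filter Topology

noncomputable section

namespace GreedyEnergy

/-- Decreasing list `n₁ > n₂ > ⋯ > n_p` of the binary exponents of `N`,
so that `N = 2^{n₁} + ⋯ + 2^{n_p}` with `n₁ > n₂ > ⋯ > n_p ≥ 0`. -/
def binExps (N : ℕ) : List ℕ :=
  ((List.range (N + 1)).filter fun i => N.testBit i).reverse

/-- The number `p = τ_b(N)` of ones in the binary expansion of `N`. -/
def pbin (N : ℕ) : ℕ := (binExps N).length

/-- `η(N)` viewed as an infinite sequence (0-indexed): the entry of index `k`
is `θ_{k+1} = 2^{n_{k+1}}/N` for `k < p`, and `0` for `k ≥ p`. -/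
def eta (N : ℕ) : ℕ → ℝ :=
  fun k => ((binExps N).map fun n => (2 : ℝ) ^ n / (N : ℝ)).getD k 0

/-- `H(θ; s)` for a finite vector of length `p` given (0-indexed) by `θ : ℕ → ℝ`:
`H(θ;s) = Σ_{k=1}^p θ_k^{s+1} + 2(2^s − 1) Σ_{k=1}^{p−1} θ_k^s Σ_{j=k+1}^p θ_j`. -/
def Hvec (θ : ℕ → ℝ) (p : ℕ) (s : ℝ) : ℝ :=
  (∑ k ∈ Finset.range p, θ k ^ (s + 1)) +
    2 * ((2 : ℝ) ^ s - 1) *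
      ∑ k ∈ Finset.range p, θ k ^ s * ∑ j ∈ Finset.Ico (k + 1) p, θ j

/-- `K(θ) = 2 log 2 + Σ_{k=1}^p θ_k² log(θ_k/4) + 2 Σ_{k=1}^{p−1} (Σ_{j=k+1}^p θ_j) θ_k log θ_k`. -/
def Kvec (θ : ℕ → ℝ) (p : ℕ) : ℝ :=
  2 * Real.log 2 + (∑ k ∈ Finset.range p, θ k ^ 2 * Real.log (θ k / 4)) +
    2 * ∑ k ∈ Finset.range p, (∑ j ∈ Finset.Ico (k + 1) p, θ j) * (θ k * Real.log (θ k))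

/-- `R(θ) = −(2 log 2) Σ_{k=1}^p (k−1) θ_k − Σ_{k=1}^p θ_k log θ_k` (0-indexed: `k−1 ↦ k`). -/
def Rvec (θ : ℕ → ℝ) (p : ℕ) : ℝ :=
  -(2 * Real.log 2) * (∑ k ∈ Finset.range p, (k : ℝ) * θ k) -
    ∑ k ∈ Finset.range p, θ k * Real.log (θ k)

/-- `G(θ; s) = Σ_{k=1}^p θ_k^s`. -/
def Gvec (θ : ℕ → ℝ) (p : ℕ) (s : ℝ) : ℝ := ∑ k ∈ Finset.range p, θ k ^ s

/-- `Λ(θ) = Σ_{k=1}^p θ_k log θ_k`. -/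
def Λvec (θ : ℕ → ℝ) (p : ℕ) : ℝ := ∑ k ∈ Finset.range p, θ k * Real.log (θ k)

/-- `H(η(N); s)`. -/
def Heta (N : ℕ) (s : ℝ) : ℝ := Hvec (eta N) (pbin N) s

/-- `K(η(N))`. -/
def Keta (N : ℕ) : ℝ := Kvec (eta N) (pbin N)

/-- `R(η(N))`. -/
def Reta (N : ℕ) : ℝ := Rvec (eta N) (pbin N)

/-- `G(η(N); s)`. -/
def Geta (N : ℕ) (s : ℝ) : ℝ := Gvec (eta N) (pbin N) s

/-- `Λ(η(N))`. -/
def Λeta (N : ℕ) : ℝ := Λvec (eta N) (pbin N)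

/-- The set `𝒮` of infinite sequences `ϑ` for which there is a strictly increasing
sequence of positive integers `N_m` with `ϑ_j = lim_m (η(N_m))_j` for every `j`. -/
def Sset : Set (ℕ → ℝ) :=
  {ϑ | ∃ Nm : ℕ → ℕ, StrictMono Nm ∧ (∀ m, 1 ≤ Nm m) ∧
        ∀ j, Tendsto (fun m => eta (Nm m) j) atTop (𝓝 (ϑ j))}

/-- `H(ϑ; s)` for an infinite sequence `ϑ` (0-indexed). The conventions
`ϑ_n log ϑ_n = 0` and `ϑ_n^s ϑ_j = 0` when `ϑ_n = 0` hold automatically,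
since `Real.log 0 = 0` and `(0:ℝ) ^ s = 0` for `s ≠ 0` (and the factor
`2^s − 1` vanishes when `s = 0`). -/
def Hinf (ϑ : ℕ → ℝ) (s : ℝ) : ℝ :=
  (∑' n : ℕ, ϑ n ^ (s + 1)) +
    2 * ((2 : ℝ) ^ s - 1) * ∑' n : ℕ, ϑ n ^ s * ∑' j : ℕ, ϑ (n + 1 + j)

/-- `K(ϑ)` for an infinite sequence `ϑ`. -/
def Kinf (ϑ : ℕ → ℝ) : ℝ :=
  2 * Real.log 2 + (∑' n : ℕ, ϑ n ^ 2 * Real.log (ϑ n / 4)) +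
    2 * ∑' n : ℕ, (∑' j : ℕ, ϑ (n + 1 + j)) * (ϑ n * Real.log (ϑ n))

/-- `R(ϑ)` for an infinite sequence `ϑ` (0-indexed: `n−1 ↦ n`). -/
def Rinf (ϑ : ℕ → ℝ) : ℝ :=
  -(2 * Real.log 2) * (∑' n : ℕ, (n : ℝ) * ϑ n) - ∑' n : ℕ, ϑ n * Real.log (ϑ n)

/-- The set of limit points of a real sequence: values of convergent subsequences. -/
def limitPoints (x : ℕ → ℝ) : Set ℝ :=
  {L | ∃ φ : ℕ → ℕ, StrictMono φ ∧ Tendsto (fun m => x (φ m)) atTop (𝓝 L)}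

/-- The Riesz `s`-kernel: `k_s(z,w) = |z−w|^{−s}` for `s ≠ 0`, `k_0(z,w) = −log|z−w|`. -/
def kernel (s : ℝ) (z w : ℂ) : ℝ :=
  if s = 0 then -Real.log ‖z - w‖ else ‖z - w‖ ^ (-s)

/-- The Riesz `s`-energy `E_s(a_0, …, a_{N−1}) = Σ_{i ≠ j} k_s(a_i, a_j)`. -/
def energy (s : ℝ) (a : ℕ → ℂ) (N : ℕ) : ℝ :=
  ∑ i ∈ Finset.range N, ∑ j ∈ Finset.range N,
    if i ≠ j then kernel s (a i) (a j) else 0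

/-- The potential `U_{N,s}(z) = Σ_{ℓ=0}^{N−1} k_s(z, a_ℓ)`. -/
def pot (s : ℝ) (a : ℕ → ℂ) (N : ℕ) (z : ℂ) : ℝ :=
  ∑ l ∈ Finset.range N, kernel s z (a l)

/-- A greedy `s`-energy sequence on the unit circle: all points lie on `S¹`, and for
every `N ≥ 1` the point `a_N` minimizes (if `s ≥ 0`) resp. maximizes (if `s < 0`)
the potential `U_{N,s}` over `S¹`. -/
def IsGreedy (s : ℝ) (a : ℕ → ℂ) : Prop :=
  (∀ n, ‖a n‖ = 1) ∧
    ∀ N, 1 ≤ N →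
      ((0 ≤ s → ∀ z : ℂ, ‖z‖ = 1 → pot s a N (a N) ≤ pot s a N z) ∧
        (s < 0 → ∀ z : ℂ, ‖z‖ = 1 → pot s a N z ≤ pot s a N (a N)))

/-- `I_s(σ) = 2^{−s} Γ((1−s)/2) / (√π Γ(1 − s/2))`. -/
def Isigma (s : ℝ) : ℝ :=
  (2 : ℝ) ^ (-s) / Real.sqrt Real.pi * (Real.Gamma ((1 - s) / 2) / Real.Gamma (1 - s / 2))

/-- The value `ζ(s)` of the Riemann zeta function at a real `s` (real part of the
analytically continued zeta function). -/
def zetaR (s : ℝ) : ℝ := (riemannZeta (s : ℂ)).re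



theorem mem_bitIndices_iff : ∀ {n i : ℕ}, i ∈ n.bitIndices ↔ n.testBit i := by
  intro n
  induction n using Nat.binaryRec with
  | zero => simp
  | bit b n ih =>
    intro i
    cases b
    · rw [Nat.bitIndices_bit_false]
      cases i with
      | zero => simp [Nat.testBit_bit_zero]
      | succ i =>
        simp only [List.mem_map, Nat.testBit_succ, Nat.bit_false]
        rw [Nat.mul_div_cancel_left _ (by norm_num : 0 < 2)]
        simp [ih]
    · rw [Nat.bitIndices_bit_true]
      cases i with
      | zero =>
        simp only [Nat.testBit_bit_zero, List.mem_cons]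
        simp
      | succ i =>
        simp only [List.mem_cons, List.mem_map, Nat.testBit_succ, Nat.bit_true]
        rw [show (2 * n + 1) / 2 = n by omega]
        simp [ih]

theorem binExps_eq (N : ℕ) : binExps N = N.bitIndices.reverse := by
  unfold binExps
  congr 1
  refine (fun hp hs => List.Perm.eq_of_pairwise (fun a b _ _ h1 h2 => absurd (h1.trans h2) (lt_irrefl _)) hs Nat.bitIndices_sorted.pairwise hp) ?_ ?_
  · refine (List.perm_ext_iff_of_nodup (List.nodup_range.filter _)
      Nat.bitIndices_sorted.pairwise.nodup).2 ?_
    intro i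
    simp only [List.mem_filter, List.mem_range, mem_bitIndices_iff, decide_eq_true_eq]
    constructor
    · rintro ⟨-, h⟩; exact h
    · intro h
      refine ⟨?_, h⟩
      have h2 := Nat.two_pow_le_of_mem_bitIndices (mem_bitIndices_iff.2 h)
      exact lt_of_le_of_lt (le_trans (Nat.le_of_lt (Nat.lt_two_pow_self (n := i))) h2) (Nat.lt_succ_self N)
  · exact List.pairwise_lt_range.filter _

theorem twoPowSum_binExps (N : ℕ) : ((binExps N).map (2 ^ ·)).sum = N := by
  rw [binExps_eq, List.map_reverse, List.sum_reverse, Nat.twoPowSum_bitIndices]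

theorem binExps_sorted (N : ℕ) : (binExps N).Pairwise (· > ·) := by
  rw [binExps_eq]
  exact List.pairwise_reverse.2 Nat.bitIndices_sorted.pairwise

theorem binExps_twoPowSum {L : List ℕ} (h : L.Pairwise (· > ·)) :
    binExps ((L.map (2 ^ ·)).sum) = L := by
  rw [binExps_eq]
  have h' : L.reverse.Pairwise (· < ·) := List.pairwise_reverse.2 h
  have := Nat.bitIndices_twoPowsum h'.sortedLT
  rw [List.map_reverse, List.sum_reverse] at this
  rw [this, List.reverse_reverse]
def expo (N : ℕ) (j : ℕ) : ℕ := (binExps N).getD j 0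

theorem eta_of_lt {N j : ℕ} (h : j < pbin N) : eta N j = (2 : ℝ) ^ (expo N j) / N := by
  unfold eta expo pbin at *
  rw [List.getD_eq_getElem _ _ (by simpa using h), List.getElem_map,
    List.getD_eq_getElem _ _ h]

theorem eta_of_ge {N j : ℕ} (h : pbin N ≤ j) : eta N j = 0 := by
  unfold eta pbin at *
  rw [List.getD_eq_default]
  simpa using h

theorem expo_lt_expo {N i j : ℕ} (hij : i < j) (hj : j < pbin N) :
    expo N j < expo N i := by
  have hs := binExps_sorted N
  rw [List.pairwise_iff_getElem] at hs
  unfold expo pbin at *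
  rw [List.getD_eq_getElem _ _ hj, List.getD_eq_getElem _ _ (hij.trans hj)]
  exact hs i j (hij.trans hj) hj hij

theorem sum_two_pow_expo (N : ℕ) : ∑ j ∈ Finset.range (pbin N), 2 ^ (expo N j) = N := by
  conv_rhs => rw [← twoPowSum_binExps N]
  unfold pbin expo
  generalize binExps N = L
  induction L with
  | nil => simp
  | cons a L ih =>
    rw [List.length_cons, Finset.sum_range_succ', List.map_cons, List.sum_cons]
    simp only [List.getD_cons_succ, List.getD_cons_zero, ih]
    ring

theorem pbin_pos {N : ℕ} (hN : 1 ≤ N) : 0 < pbin N := by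
  by_contra h
  push_neg at h
  have := sum_two_pow_expo N
  rw [Nat.le_zero.1 h] at this
  simp at this
  omega

theorem two_pow_expo_le {N : ℕ} (hN : 1 ≤ N) : 2 ^ (expo N 0) ≤ N := by
  conv_rhs => rw [← sum_two_pow_expo N]
  exact Finset.single_le_sum (f := fun j => 2 ^ expo N j) (fun _ _ => Nat.zero_le _)
    (Finset.mem_range.2 (pbin_pos hN))

theorem expo_le_expo_zero {N j : ℕ} (hj : j < pbin N) : expo N j ≤ expo N 0 := by
  rcases Nat.eq_zero_or_pos j with rfl | h
  · exact le_rfl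
  · exact (expo_lt_expo h hj).le

theorem lt_two_pow_expo {N : ℕ} (hN : 1 ≤ N) : N < 2 ^ (expo N 0 + 1) := by
  conv_lhs => rw [← sum_two_pow_expo N]
  have hinj : Set.InjOn (expo N) (Finset.range (pbin N)) := by
    intro a ha b hb hab
    rcases lt_trichotomy a b with h | h | h
    · exact absurd hab (expo_lt_expo h (Finset.mem_range.1 hb)).ne'
    · exact h
    · exact absurd hab (expo_lt_expo h (Finset.mem_range.1 ha)).ne
  rw [← Finset.sum_image (fun a ha b hb => hinj ha hb)]
  exact Nat.geomSum_lt le_rfl (fun k hk => by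
    obtain ⟨j, hj, rfl⟩ := Finset.mem_image.1 hk
    exact Nat.lt_succ_of_le (expo_le_expo_zero (Finset.mem_range.1 hj)))

theorem expo_add_le {N : ℕ} : ∀ {j}, j < pbin N → expo N j + j ≤ expo N 0 := by
  intro j
  induction j with
  | zero => simp
  | succ j ih =>
    intro hj
    have h1 := expo_lt_expo (Nat.lt_succ_self j) hj
    have h2 := ih (Nat.lt_of_succ_lt hj)
    simp only [Nat.succ_eq_add_one] at *
    omega

theorem eta_nonneg {N : ℕ} (j : ℕ) : 0 ≤ eta N j := by
  rcases lt_or_ge j (pbin N) with h | h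
  · rw [eta_of_lt h]; positivity
  · rw [eta_of_ge h]

theorem Npos {N : ℕ} (hN : 1 ≤ N) : (0:ℝ) < N := by exact_mod_cast hN

theorem eta_zero_le_one {N : ℕ} (hN : 1 ≤ N) : eta N 0 ≤ 1 := by
  rw [eta_of_lt (pbin_pos hN), div_le_one (Npos hN)]
  exact_mod_cast two_pow_expo_le hN

theorem half_lt_eta_zero {N : ℕ} (hN : 1 ≤ N) : 1 / 2 < eta N 0 := by
  rw [eta_of_lt (pbin_pos hN), div_lt_div_iff₀ two_pos (Npos hN)]
  have := lt_two_pow_expo hN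
  have : (N : ℝ) < 2 ^ (expo N 0 + 1) := by exact_mod_cast this
  calc (1:ℝ) * N = N := one_mul _
  _ < 2 ^ (expo N 0 + 1) := this
  _ = 2 ^ expo N 0 * 2 := by ring

theorem eta_le_geo {N : ℕ} (hN : 1 ≤ N) (j : ℕ) : eta N j ≤ (1/2 : ℝ) ^ j := by
  rcases lt_or_ge j (pbin N) with h | h
  · rw [eta_of_lt h, div_le_iff₀ (Npos hN), div_pow, one_pow, div_mul_eq_mul_div,
      le_div_iff₀ (by positivity : (0:ℝ) < 2 ^ j), ← pow_add]
    calc ((2:ℝ) ^ (expo N j + j)) ≤ 2 ^ (expo N 0) := by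
          exact_mod_cast pow_le_pow_right₀ one_le_two (expo_add_le h)
    _ ≤ N := by exact_mod_cast two_pow_expo_le hN
    _ ≤ 1 * N := by rw [one_mul]
  · rw [eta_of_ge h]; positivity

theorem eta_succ_le {N : ℕ} (j : ℕ) : 2 * eta N (j + 1) ≤ eta N j := by
  rcases lt_or_ge (j+1) (pbin N) with h | h
  · rw [eta_of_lt h, eta_of_lt (Nat.lt_of_succ_lt h)]
    have hNpos : (0:ℝ) < N := by
      rcases Nat.eq_zero_or_pos N with rfl | hN
      · exfalso; unfold pbin binExps at h; simp at h
      · exact_mod_cast hN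
    rw [← mul_div_assoc, div_le_div_iff₀ hNpos hNpos]
    have hexp := expo_lt_expo (Nat.lt_succ_self j) h
    have : (2:ℝ) * 2 ^ expo N (j+1) ≤ 2 ^ expo N j := by
      rw [← pow_succ']
      exact_mod_cast pow_le_pow_right₀ one_le_two hexp
    nlinarith [this, hNpos]
  · rw [eta_of_ge h]
    simp [eta_nonneg j]

theorem sum_eta {N : ℕ} (hN : 1 ≤ N) : ∑ j ∈ Finset.range (pbin N), eta N j = 1 := by
  have : ∑ j ∈ Finset.range (pbin N), eta N j
      = (∑ j ∈ Finset.range (pbin N), (2:ℝ) ^ expo N j) / N := by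
    rw [Finset.sum_div]
    exact Finset.sum_congr rfl fun j hj => eta_of_lt (Finset.mem_range.1 hj)
  rw [this]
  have : (∑ j ∈ Finset.range (pbin N), (2:ℝ) ^ expo N j) = N := by
    exact_mod_cast congrArg (Nat.cast (R := ℝ)) (sum_two_pow_expo N)
  rw [this, div_self (Npos hN).ne']

theorem geo_range (n : ℕ) : ∑ i ∈ Finset.range n, (1/2:ℝ)^i = 2 - 2*(1/2)^n := by
  rw [geom_sum_eq (by norm_num : (1/2:ℝ) ≠ 1) n]
  field_simp
  ring

theorem sum_eta_range {N M : ℕ} (hN : 1 ≤ N) (h : pbin N ≤ M) :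
    ∑ j ∈ Finset.range M, eta N j = 1 := by
  rw [← sum_eta hN]
  symm
  apply Finset.sum_subset (Finset.range_subset_range.2 h)
  intro x _ hx
  exact eta_of_ge (le_of_not_gt (fun hc => hx (Finset.mem_range.2 hc)))

theorem sum_eta_le_one {N : ℕ} (hN : 1 ≤ N) (J : ℕ) :
    ∑ j ∈ Finset.range J, eta N j ≤ 1 := by
  rw [← sum_eta_range hN (le_max_right J (pbin N))]
  exact Finset.sum_le_sum_of_subset_of_nonneg
    (Finset.range_subset_range.2 (le_max_left _ _)) (fun i _ _ => eta_nonneg i)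

theorem one_sub_le_sum_eta {N : ℕ} (hN : 1 ≤ N) (J : ℕ) :
    1 - 2 * (1/2:ℝ)^J ≤ ∑ j ∈ Finset.range J, eta N j := by
  set M := max J (pbin N) with hM
  have h1 : ∑ j ∈ Finset.range M, eta N j = 1 := sum_eta_range hN (le_max_right _ _)
  have hsplit : ∑ j ∈ Finset.Ico 0 J, eta N j + ∑ j ∈ Finset.Ico J M, eta N j
      = ∑ j ∈ Finset.Ico 0 M, eta N j :=
    Finset.sum_Ico_consecutive _ (Nat.zero_le _) (le_max_left _ _)
  rw [← Finset.range_eq_Ico, ← Finset.range_eq_Ico] at hsplit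
  have hgeo : ∑ j ∈ Finset.Ico J M, (1/2:ℝ)^j ≤ 2 * (1/2)^J := by
    have hsplit2 : ∑ j ∈ Finset.Ico 0 J, (1/2:ℝ)^j + ∑ j ∈ Finset.Ico J M, (1/2:ℝ)^j
        = ∑ j ∈ Finset.Ico 0 M, (1/2:ℝ)^j :=
      Finset.sum_Ico_consecutive _ (Nat.zero_le _) (le_max_left _ _)
    rw [← Finset.range_eq_Ico, ← Finset.range_eq_Ico, geo_range, geo_range] at hsplit2
    have : (0:ℝ) ≤ (1/2)^M := by positivity
    linarith
  have hle : ∑ j ∈ Finset.Ico J M, eta N j ≤ ∑ j ∈ Finset.Ico J M, (1/2:ℝ)^j :=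
    Finset.sum_le_sum (fun i _ => eta_le_geo hN i)
  linarith [hsplit, h1, hgeo, hle]

theorem eta_ratio {N j : ℕ} (hN : 1 ≤ N) (h : j < pbin N) :
    ∃ t : ℕ, j ≤ t ∧ eta N j = eta N 0 * (1/2:ℝ)^t := by
  refine ⟨expo N 0 - expo N j, ?_, ?_⟩
  · have := expo_add_le h
    omega
  · have hle : expo N j ≤ expo N 0 := expo_le_expo_zero h
    have ht : expo N j + (expo N 0 - expo N j) = expo N 0 := by omega
    have hpow : (2:ℝ) ^ expo N 0 = 2 ^ expo N j * 2 ^ (expo N 0 - expo N j) := by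
      rw [← pow_add, ht]
    rw [eta_of_lt h, eta_of_lt (pbin_pos hN), hpow]
    have h2 : ((2:ℝ)) ^ (expo N 0 - expo N j) ≠ 0 := by positivity
    field_simp
    rw [← mul_pow]; norm_num

theorem binExps_of_exps {p : ℕ} {e : ℕ → ℕ} (he : ∀ i j, i < j → j < p → e j < e i) :
    binExps (∑ j ∈ Finset.range p, 2 ^ e j) = (List.range p).map e := by
  have hsort : ((List.range p).map e).Pairwise (· > ·) := by
    rw [List.pairwise_map]
    refine List.Pairwise.imp_of_mem ?_ List.pairwise_lt_range
    intro a b ha hb hab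
    exact he a b hab (List.mem_range.1 hb)
  have hsum : ∑ j ∈ Finset.range p, 2 ^ e j = (((List.range p).map e).map (2 ^ ·)).sum := by
    rw [List.map_map]; rfl
  rw [hsum, binExps_twoPowSum hsort]

theorem pbin_of_exps {p : ℕ} {e : ℕ → ℕ} (he : ∀ i j, i < j → j < p → e j < e i) :
    pbin (∑ j ∈ Finset.range p, 2 ^ e j) = p := by
  rw [pbin, binExps_of_exps he]; simp

theorem expo_of_exps {p : ℕ} {e : ℕ → ℕ} (he : ∀ i j, i < j → j < p → e j < e i)
    {j : ℕ} (hj : j < p) :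
    expo (∑ j ∈ Finset.range p, 2 ^ e j) j = e j := by
  rw [expo, binExps_of_exps he, List.getD_eq_getElem _ _ (by simpa using hj)]
  simp

theorem pow_half_sep {c : ℝ} (hc : 0 < c) {s t : ℕ}
    (h1 : |(1/2:ℝ)^s - c| < c/3) (h2 : |(1/2:ℝ)^t - c| < c/3) : s = t := by
  have key : ∀ s t : ℕ, s < t → |(1/2:ℝ)^s - c| < c/3 → |(1/2:ℝ)^t - c| < c/3 → False := by
    intro s t hst h1 h2
    have h3 : (1/2:ℝ)^t ≤ (1/2)^(s+1) :=
      pow_le_pow_of_le_one (by norm_num) (by norm_num) hst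
    rw [abs_lt] at h1 h2
    have h4 : (1/2:ℝ)^(s+1) = (1/2)^s * (1/2) := pow_succ _ _
    nlinarith
  rcases lt_trichotomy s t with h | h | h
  · exact absurd (key s t h h1 h2) not_false
  · exact h
  · exact absurd (key t s h h2 h1) not_false

theorem forward_exists_pow {ϑ : ℕ → ℝ} {Nm : ℕ → ℕ} (hone : ∀ m, 1 ≤ Nm m)
    (hconv : ∀ j, Filter.Tendsto (fun m => eta (Nm m) j) Filter.atTop (nhds (ϑ j)))
    (hpos0 : 0 < ϑ 0) {j : ℕ} (hj : 0 < ϑ j) :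
    ∃ t : ℕ, j ≤ t ∧ ϑ j = ϑ 0 * (1/2:ℝ)^t := by
  set r : ℕ → ℝ := fun m => eta (Nm m) j / eta (Nm m) 0 with hr_def
  set c : ℝ := ϑ j / ϑ 0 with hc_def
  have hcpos : 0 < c := div_pos hj hpos0
  have hr : Filter.Tendsto r Filter.atTop (nhds c) := (hconv j).div (hconv 0) hpos0.ne'
  obtain ⟨M, hM⟩ := (Metric.tendsto_atTop.1 hr) (c/3) (by positivity)
  simp only [Real.dist_eq] at hM
  -- every m ≥ M has a power representation
  have hrep : ∀ m, M ≤ m → ∃ t : ℕ, j ≤ t ∧ r m = (1/2:ℝ)^t := by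
    intro m hm
    have h1 := hM m hm
    have hrpos : 0 < r m := by
      rw [abs_lt] at h1; linarith
    have hjlt : j < pbin (Nm m) := by
      by_contra hcon
      push_neg at hcon
      rw [hr_def] at hrpos
      simp only [eta_of_ge hcon, zero_div] at hrpos
      exact lt_irrefl _ hrpos
    obtain ⟨t, ht1, ht2⟩ := eta_ratio (hone m) hjlt
    refine ⟨t, ht1, ?_⟩
    have h0pos : (0:ℝ) < eta (Nm m) 0 := lt_trans (by norm_num) (half_lt_eta_zero (hone m))
    rw [hr_def]
    simp only
    rw [ht2, mul_comm, mul_div_assoc, div_self h0pos.ne', mul_one]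
  obtain ⟨t0, ht01, ht02⟩ := hrep M le_rfl
  -- r is eventually constant equal to (1/2)^t0
  have hconst : ∀ m, M ≤ m → r m = (1/2:ℝ)^t0 := by
    intro m hm
    obtain ⟨t, _, ht2⟩ := hrep m hm
    have : t = t0 := by
      refine pow_half_sep hcpos ?_ ?_
      · rw [← ht2]; exact hM m hm
      · rw [← ht02]; exact hM M le_rfl
    rw [ht2, this]
  have : c = (1/2:ℝ)^t0 := by
    refine tendsto_nhds_unique hr ?_
    refine Filter.Tendsto.congr' ?_ tendsto_const_nhds
    filter_upwards [Filter.eventually_ge_atTop M] with m hm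
    exact (hconst m hm).symm
  refine ⟨t0, ht01, ?_⟩
  rw [← this, hc_def]
  field_simp

open Filter in
theorem forward_dir {ϑ : ℕ → ℝ} (hnn : ∀ j, 0 ≤ ϑ j) (hdec : ∀ j, ϑ (j + 1) ≤ ϑ j)
    {Nm : ℕ → ℕ} (hone : ∀ m, 1 ≤ Nm m)
    (hconv : ∀ j, Tendsto (fun m => eta (Nm m) j) atTop (𝓝 (ϑ j))) :
    ((1 / 2 ≤ ϑ 0 ∧ ϑ 0 ≤ 1) ∧
        ∃ k : ℕ → ℕ, k 0 = 0 ∧ StrictMonoOn k {j | 0 < ϑ j} ∧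
          (∀ j, 0 < ϑ j → ϑ j = ϑ 0 / 2 ^ k j) ∧
          1 / ϑ 0 = ∑' j : ℕ, (if 0 < ϑ j then ((2 : ℝ) ^ k j)⁻¹ else 0)) := by
  have h05 : 1/2 ≤ ϑ 0 :=
    le_of_tendsto_of_tendsto' tendsto_const_nhds (hconv 0)
      (fun m => (half_lt_eta_zero (hone m)).le)
  have h1 : ϑ 0 ≤ 1 :=
    le_of_tendsto (hconv 0) (Filter.Eventually.of_forall fun m => eta_zero_le_one (hone m))
  have hpos0 : 0 < ϑ 0 := by linarith
  have hgeo : ∀ j, ϑ j ≤ (1/2:ℝ)^j := fun j =>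
    le_of_tendsto (hconv j) (Filter.Eventually.of_forall fun m => eta_le_geo (hone m) j)
  have hhalf : ∀ j, 2 * ϑ (j+1) ≤ ϑ j := fun j =>
    le_of_tendsto_of_tendsto' ((hconv (j+1)).const_mul 2) (hconv j)
      (fun m => eta_succ_le j)
  have hanti : Antitone ϑ := antitone_nat_of_succ_le hdec
  choose! t ht1 ht2 using fun j => forward_exists_pow hone hconv hpos0 (j := j)
  refine ⟨⟨h05, h1⟩, t, ?_, ?_, ?_, ?_⟩
  · -- t 0 = 0
    have h := ht2 0 hpos0
    by_contra hne
    have h0 : 0 < t 0 := Nat.pos_of_ne_zero hne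
    have : (1/2:ℝ)^(t 0) < 1 := pow_lt_one₀ (by norm_num) (by norm_num) h0.ne'
    nlinarith
  · -- strict mono on support
    intro i hi j hj hij
    have hij' : i + 1 ≤ j := hij
    have h2 : ϑ j ≤ ϑ (i+1) := hanti hij'
    have h3 : ϑ j < ϑ i := by have := hhalf i; simp only [Set.mem_setOf_eq] at hi hj; linarith
    rw [ht2 i hi, ht2 j hj] at h3
    have h4 : (1/2:ℝ)^(t j) < (1/2)^(t i) := by
      have := (mul_lt_mul_iff_right₀ hpos0).1 h3
      exact this
    exact (pow_lt_pow_iff_right_of_lt_one₀ (by norm_num) (by norm_num)).1 h4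
  · -- value formula
    intro j hj
    rw [ht2 j hj, div_pow, one_pow, mul_one_div]
  · -- tsum
    have hsummable : Summable ϑ :=
      Summable.of_nonneg_of_le hnn hgeo (summable_geometric_of_lt_one (by norm_num) (by norm_num))
    have hpartial : Tendsto (fun J => ∑ j ∈ Finset.range J, ϑ j) atTop (𝓝 (∑' j, ϑ j)) :=
      hsummable.hasSum.tendsto_sum_nat
    have hJle : ∀ J, ∑ j ∈ Finset.range J, ϑ j ≤ 1 := fun J =>
      le_of_tendsto (tendsto_finset_sum _ fun j _ => hconv j)
        (Filter.Eventually.of_forall fun m => sum_eta_le_one (hone m) J)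
    have hJge : ∀ J, 1 - 2 * (1/2:ℝ)^J ≤ ∑ j ∈ Finset.range J, ϑ j := fun J =>
      le_of_tendsto_of_tendsto' tendsto_const_nhds (tendsto_finset_sum _ fun j _ => hconv j)
        (fun m => one_sub_le_sum_eta (hone m) J)
    have htsum1 : (∑' j, ϑ j) ≤ 1 :=
      le_of_tendsto hpartial (Filter.Eventually.of_forall hJle)
    have htsum2 : (1:ℝ) ≤ ∑' j, ϑ j := by
      have hlim : Tendsto (fun J : ℕ => 1 - 2 * (1/2:ℝ)^J) atTop (𝓝 (1 - 2 * 0)) :=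
        tendsto_const_nhds.sub ((tendsto_pow_atTop_nhds_zero_of_lt_one (by norm_num)
          (by norm_num)).const_mul 2)
      rw [mul_zero, sub_zero] at hlim
      exact le_of_tendsto_of_tendsto' hlim hpartial hJge
    have htsum : (∑' j, ϑ j) = 1 := le_antisymm htsum1 htsum2
    have hcongr : ∀ j, (if 0 < ϑ j then ((2:ℝ) ^ t j)⁻¹ else 0) = ϑ j * (ϑ 0)⁻¹ := by
      intro j
      by_cases hj : 0 < ϑ j
      · rw [if_pos hj, ht2 j hj, div_pow, one_pow, one_div,
          mul_comm (ϑ 0) ((2:ℝ)^(t j))⁻¹, mul_assoc, mul_inv_cancel₀ hpos0.ne', mul_one]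
      · rw [if_neg hj, le_antisymm (not_lt.1 hj) (hnn j), zero_mul]
    rw [tsum_congr hcongr, tsum_mul_right, htsum, one_mul, one_div]

open Filter in
theorem reverse_dir {ϑ : ℕ → ℝ} (hnn : ∀ j, 0 ≤ ϑ j) (hdec : ∀ j, ϑ (j + 1) ≤ ϑ j)
    (h05 : 1 / 2 ≤ ϑ 0) (h1 : ϑ 0 ≤ 1) {k : ℕ → ℕ} (hk0 : k 0 = 0)
    (hkmono : StrictMonoOn k {j | 0 < ϑ j})
    (hval : ∀ j, 0 < ϑ j → ϑ j = ϑ 0 / 2 ^ k j)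
    (hsum : 1 / ϑ 0 = ∑' j : ℕ, (if 0 < ϑ j then ((2 : ℝ) ^ k j)⁻¹ else 0)) :
    ∃ Nm : ℕ → ℕ, StrictMono Nm ∧ (∀ m, 1 ≤ Nm m) ∧
      ∀ j, Tendsto (fun m => eta (Nm m) j) atTop (𝓝 (ϑ j)) := by
  classical
  have hc : 0 < ϑ 0 := by linarith
  have hanti : Antitone ϑ := antitone_nat_of_succ_le hdec
  have hinv : 0 < 1 / ϑ 0 := by positivity
  set g : ℕ → ℝ := fun i => ((2:ℝ) ^ k i)⁻¹ with hg_def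
  have hgpos : ∀ i, 0 < g i := fun i => by positivity
  by_cases hall : ∀ j, 0 < ϑ j
  · -- infinite support
    have hkm : StrictMono k := fun a b hab => hkmono (hall a) (hall b) hab
    set N : ℕ → ℕ := fun m => ∑ j ∈ Finset.range (m+1), 2 ^ (k m - k j) with hN_def
    have he : ∀ m, ∀ i j, i < j → j < m + 1 → k m - k j < k m - k i := by
      intro m i j hij hj
      have h1 : k i < k j := hkm hij
      have h2 : k j ≤ k m := hkm.monotone (by omega)
      omega
    have hpbin : ∀ m, pbin (N m) = m + 1 := fun m => pbin_of_exps (he m)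
    have hexpo : ∀ m j, j < m + 1 → expo (N m) j = k m - k j := fun m j hj =>
      expo_of_exps (he m) hj
    have hN1 : ∀ m, 1 ≤ N m := fun m =>
      Finset.sum_pos (fun i _ => Nat.pow_pos (by norm_num)) ⟨0, by simp⟩
    have h2pow : ∀ m, 2 ^ k m ≤ N m := by
      intro m
      have := Finset.single_le_sum (f := fun j => 2 ^ (k m - k j))
        (fun i _ => Nat.zero_le _) (Finset.mem_range.2 (Nat.succ_pos m))
      simpa [hk0] using this
    have hlt : ∀ m, N m < 2 ^ (k m + 1) := by
      intro m
      have h := lt_two_pow_expo (hN1 m)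
      rwa [hexpo m 0 (Nat.succ_pos m), hk0, Nat.sub_zero] at h
    have hmono : StrictMono N := by
      refine strictMono_nat_of_lt_succ (fun m => ?_)
      calc N m < 2 ^ (k m + 1) := hlt m
      _ ≤ 2 ^ (k (m+1)) := Nat.pow_le_pow_right (by norm_num) (hkm (Nat.lt_succ_self m))
      _ ≤ N (m+1) := h2pow (m+1)
    -- analytic part
    have hsummable : Summable g := by
      refine Summable.of_nonneg_of_le (fun i => (hgpos i).le) (fun i => ?_)
        (summable_geometric_of_lt_one (r := 1/2) (by norm_num) (by norm_num))
      have h2 : (2:ℝ)^i ≤ 2^(k i) := by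
        exact_mod_cast Nat.pow_le_pow_right (by norm_num) hkm.le_apply
      rw [hg_def, one_div, inv_pow]
      exact inv_anti₀ (by positivity) h2
    have hsum' : (∑' i, g i) = 1 / ϑ 0 := by
      rw [hsum]
      exact tsum_congr fun j => by rw [if_pos (hall j)]
    set S : ℕ → ℝ := fun m => ∑ i ∈ Finset.range (m+1), g i with hS_def
    have hS : Tendsto S atTop (𝓝 (1 / ϑ 0)) := by
      rw [← hsum']
      exact hsummable.hasSum.tendsto_sum_nat.comp (tendsto_add_atTop_nat 1)
    have hcast : ∀ m, (N m : ℝ) = 2 ^ k m * S m := by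
      intro m
      rw [hN_def]
      push_cast
      rw [hS_def, Finset.mul_sum]
      refine Finset.sum_congr rfl fun j hj => ?_
      rw [pow_sub₀ (2:ℝ) two_ne_zero (hkm.monotone (by
        have := Finset.mem_range.1 hj; omega))]
    have hSpos : ∀ m, 0 < S m := fun m =>
      Finset.sum_pos (fun i _ => hgpos i) ⟨0, by simp⟩
    have heta : ∀ m j, j ≤ m → eta (N m) j = g j / S m := by
      intro m j hj
      rw [eta_of_lt (by rw [hpbin m]; omega), hexpo m j (by omega), hcast m,
        pow_sub₀ (2:ℝ) two_ne_zero (hkm.monotone hj),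
        mul_div_mul_left _ _ (by positivity : ((2:ℝ) ^ k m) ≠ 0)]
    refine ⟨N, hmono, hN1, fun j => ?_⟩
    have hlim : Tendsto (fun m => g j / S m) atTop (𝓝 (g j / (1 / ϑ 0))) :=
      tendsto_const_nhds.div hS hinv.ne'
    have hval' : g j / (1 / ϑ 0) = ϑ j := by
      rw [hval j (hall j), hg_def]
      field_simp
    rw [← hval']
    refine hlim.congr' ?_
    filter_upwards [eventually_ge_atTop j] with m hm
    exact (heta m j hm).symm
  · -- finite support
    push_neg at hall
    have hexzero : ∃ j, ϑ j = 0 := by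
      obtain ⟨j, hj⟩ := hall
      exact ⟨j, le_antisymm hj (hnn j)⟩
    set p := Nat.find hexzero with hp_def
    have hp0 : ϑ p = 0 := Nat.find_spec hexzero
    have hposlt : ∀ j, j < p → 0 < ϑ j := fun j hj =>
      lt_of_le_of_ne (hnn j) (Ne.symm (Nat.find_min hexzero hj))
    have hppos : 0 < p := by
      rcases Nat.eq_zero_or_pos p with h | h
      · exfalso; rw [h] at hp0; linarith
      · exact h
    have hzero : ∀ j, p ≤ j → ϑ j = 0 := fun j hj =>
      le_antisymm (hp0 ▸ hanti hj) (hnn j)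
    have hkK : ∀ j, j < p → k j ≤ k (p-1) := by
      intro j hj
      rcases eq_or_lt_of_le (by omega : j ≤ p - 1) with h | h
      · rw [h]
      · exact (hkmono (hposlt j hj) (hposlt (p-1) (by omega)) h).le
    set K := k (p-1) with hK_def
    set N : ℕ → ℕ := fun m => ∑ j ∈ Finset.range p, 2 ^ (K + m - k j) with hN_def
    have he : ∀ m, ∀ i j, i < j → j < p → K + m - k j < K + m - k i := by
      intro m i j hij hj
      have h1 : k i < k j := hkmono (hposlt i (hij.trans hj)) (hposlt j hj) hij
      have h2 : k j ≤ K := hkK j hj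
      omega
    have hpbin : ∀ m, pbin (N m) = p := fun m => pbin_of_exps (he m)
    have hexpo : ∀ m j, j < p → expo (N m) j = K + m - k j := fun m j hj =>
      expo_of_exps (he m) hj
    have hN1 : ∀ m, 1 ≤ N m := fun m =>
      Finset.sum_pos (fun i _ => Nat.pow_pos (by norm_num))
        ⟨0, Finset.mem_range.2 hppos⟩
    have hmono : StrictMono N := by
      refine strictMono_nat_of_lt_succ (fun m => ?_)
      refine Finset.sum_lt_sum_of_nonempty ⟨0, Finset.mem_range.2 hppos⟩ (fun j hj => ?_)
      have := hkK j (Finset.mem_range.1 hj)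
      exact Nat.pow_lt_pow_right (by norm_num) (by omega)
    have hS_eq : ∑ j ∈ Finset.range p, g j = 1 / ϑ 0 := by
      rw [hsum]
      rw [tsum_eq_sum (s := Finset.range p) (fun j hj =>
        if_neg (by simp only [not_lt]; rw [hzero j (le_of_not_gt
          (fun hc' => hj (Finset.mem_range.2 hc')))]))]
      exact Finset.sum_congr rfl fun j hj => by
        rw [if_pos (hposlt j (Finset.mem_range.1 hj))]
    have hSpos : 0 < ∑ j ∈ Finset.range p, g j := by rw [hS_eq]; exact hinv
    have hcast : ∀ m, (N m : ℝ) = 2 ^ (K + m) * ∑ j ∈ Finset.range p, g j := by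
      intro m
      rw [hN_def]
      push_cast
      rw [Finset.mul_sum]
      refine Finset.sum_congr rfl fun j hj => ?_
      rw [pow_sub₀ (2:ℝ) two_ne_zero (le_trans (hkK j (Finset.mem_range.1 hj))
        (Nat.le_add_right _ _))]
    have heta : ∀ m j, j < p → eta (N m) j = ϑ j := by
      intro m j hj
      rw [eta_of_lt (by rw [hpbin m]; omega), hexpo m j hj, hcast m,
        pow_sub₀ (2:ℝ) two_ne_zero (le_trans (hkK j hj) (Nat.le_add_right _ _)),
        mul_div_mul_left _ _ (by positivity : ((2:ℝ) ^ (K + m)) ≠ 0), hS_eq,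
        hval j (hposlt j hj)]
      field_simp
    refine ⟨N, hmono, hN1, fun j => ?_⟩
    rcases lt_or_ge j p with hj | hj
    · have : (fun m => eta (N m) j) = fun _ => ϑ j := funext fun m => heta m j hj
      rw [this]
      exact tendsto_const_nhds
    · have : (fun m => eta (N m) j) = fun _ => ϑ j := funext fun m => by
        rw [eta_of_ge (by rw [hpbin m]; omega), hzero j hj]
      rw [this]
      exact tendsto_const_nhds

theorem stmt13 (ϑ : ℕ → ℝ) (hnn : ∀ j, 0 ≤ ϑ j) (hdec : ∀ j, ϑ (j + 1) ≤ ϑ j) :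
    ϑ ∈ Sset ↔
      ((1 / 2 ≤ ϑ 0 ∧ ϑ 0 ≤ 1) ∧
        ∃ k : ℕ → ℕ, k 0 = 0 ∧ StrictMonoOn k {j | 0 < ϑ j} ∧
          (∀ j, 0 < ϑ j → ϑ j = ϑ 0 / 2 ^ k j) ∧
          1 / ϑ 0 = ∑' j : ℕ, (if 0 < ϑ j then ((2 : ℝ) ^ k j)⁻¹ else 0)) := by
  constructor
  · rintro ⟨Nm, _, hone, hconv⟩
    exact forward_dir hnn hdec hone hconv
  · rintro ⟨⟨h05, h1⟩, k, hk0, hkmono, hval, hsum⟩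
    obtain ⟨Nm, hmono, hone, hconv⟩ := reverse_dir hnn hdec h05 h1 hk0 hkmono hval hsum
    exact ⟨Nm, hmono, hone, hconv⟩


end GreedyEnergy
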